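/- Fix N ∈ ℕ and ω ∈ ℝᴺ, and let f^{aj}_k = 2(ω^a·δ^j_k − ω^j·δ^a_k) be the κ-Minkowski structure constants. Define, on the open set U = {A ∈ ℝᴺ : ω·A ≠ 0}, the matrix-valued function γ with entries γ^i_j(A) = (ω·A)·(1 + coth(ω·A))·δ^i_j + ((1 − (ω·A) − (ω·A)·coth(ω·A))/(ω·A))·ω^i·A_j. Then γ is differentiable on U and satisfies the first master equation of the linear Poisson gauge theory at every point of U: Σ_i (γ^j_i(A)·∂^i_A γ^k_l(A) − γ^k_i(A)·∂^i_A γ^j_l(A)) = Σ_i γ^i_l(A)·f^{jk}_i for all j,k,l. -/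

import Mathlib

noncomputable def Gf (t : ℝ) : ℝ := t * (1 + Real.cosh t / Real.sinh t)
noncomputable def Hf (t : ℝ) : ℝ :=
  (1 - t - t * (Real.cosh t / Real.sinh t)) / t
noncomputable def Gd (t : ℝ) : ℝ :=
  1 + Real.cosh t / Real.sinh t + t * (1 - (Real.cosh t / Real.sinh t) ^ 2)
noncomputable def Hd (t : ℝ) : ℝ := (-(Gd t) * t - (1 - Gf t)) / t ^ 2

lemma sinh_ne {t : ℝ} (ht : t ≠ 0) : Real.sinh t ≠ 0 := by
  simpa using Real.sinh_ne_zero.mpr ht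

lemma hasDerivAt_Gf {t : ℝ} (ht : t ≠ 0) : HasDerivAt Gf (Gd t) t := by
  have hs := sinh_ne ht
  have h1 : HasDerivAt (fun u => Real.cosh u / Real.sinh u)
      ((Real.sinh t * Real.sinh t - Real.cosh t * Real.cosh t) / Real.sinh t ^ 2) t :=
    (Real.hasDerivAt_cosh t).div (Real.hasDerivAt_sinh t) hs
  have h3 := (hasDerivAt_id t).mul (h1.const_add 1)
  have hval : Gd t = 1 * (1 + Real.cosh t / Real.sinh t) +
      id t * ((Real.sinh t * Real.sinh t - Real.cosh t * Real.cosh t) / Real.sinh t ^ 2) := by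
    unfold Gd
    generalize Real.cosh t = c
    generalize hgen : Real.sinh t = s at hs ⊢
    simp only [id]
    field_simp
  rw [hval]
  exact h3

lemma hasDerivAt_Hf {t : ℝ} (ht : t ≠ 0) : HasDerivAt Hf (Hd t) t := by
  have hGf : HasDerivAt (fun u => 1 - Gf u) (-(Gd t)) t := (hasDerivAt_Gf ht).const_sub 1
  have h := hGf.div (hasDerivAt_id t) ht
  have heq : Hf = fun u => (1 - Gf u) / id u := by
    funext u; unfold Hf Gf; simp only [id]; congr 1; ring
  have hval : Hd t = (-Gd t * id t - (1 - Gf t) * 1) / id t ^ 2 := by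
    unfold Hd; simp only [id]; ring
  rw [heq, hval]
  exact h

lemma hGH1 {t : ℝ} (ht : t ≠ 0) : Gf t + Hf t * t = 1 := by
  have hs := sinh_ne ht
  unfold Gf Hf
  generalize Real.cosh t = c
  generalize hgen : Real.sinh t = s at hs
  field_simp
  ring

lemma hGH2 {t : ℝ} (ht : t ≠ 0) : Gd t - Gf t * Hf t = 2 * Gf t := by
  have hs := sinh_ne ht
  unfold Gd Gf Hf
  generalize Real.cosh t = c
  generalize hgen : Real.sinh t = s at hs
  field_simp
  ring

lemma gamma_deriv {N : ℕ} (ω : Fin N → ℝ) (k l : Fin N) (A : Fin N → ℝ)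
    (ht : (∑ s, ω s * A s) ≠ 0) :
    DifferentiableAt ℝ (fun B => Gf (∑ s, ω s * B s) * (if k = l then 1 else 0)
      + Hf (∑ s, ω s * B s) * ω k * B l) A ∧
    ∀ i, fderiv ℝ (fun B => Gf (∑ s, ω s * B s) * (if k = l then 1 else 0)
        + Hf (∑ s, ω s * B s) * ω k * B l) A (Pi.single i 1)
      = Gd (∑ s, ω s * A s) * ω i * (if k = l then 1 else 0)
        + Hd (∑ s, ω s * A s) * ω i * (ω k * A l)
        + Hf (∑ s, ω s * A s) * ω k * (if i = l then 1 else 0) := by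
  set t := ∑ s, ω s * A s with htdef
  set L : (Fin N → ℝ) →L[ℝ] ℝ :=
    ∑ s, ω s • (ContinuousLinearMap.proj s : (Fin N → ℝ) →L[ℝ] ℝ) with hLdef
  have hLfun : (fun B : Fin N → ℝ => ∑ s, ω s * B s) = ⇑L := by
    funext B
    simp [hLdef, ContinuousLinearMap.sum_apply]
  have hL : HasFDerivAt (fun B : Fin N → ℝ => ∑ s, ω s * B s) L A := by
    rw [hLfun]; exact L.hasFDerivAt
  have hLs : ∀ i, L (Pi.single i 1) = ω i := by
    intro i
    rw [← hLfun]
    simp [Pi.single_apply]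
  have hgB : HasFDerivAt (fun B => Gf (∑ s, ω s * B s)) (Gd t • L) A :=
    by have := (hasDerivAt_Gf ht).comp_hasFDerivAt A hL; exact this
  have hhB : HasFDerivAt (fun B => Hf (∑ s, ω s * B s)) (Hd t • L) A :=
    by have := (hasDerivAt_Hf ht).comp_hasFDerivAt A hL; exact this
  have hproj : HasFDerivAt (fun B : Fin N → ℝ => B l)
      (ContinuousLinearMap.proj l : (Fin N → ℝ) →L[ℝ] ℝ) A :=
    by exact (ContinuousLinearMap.proj l : (Fin N → ℝ) →L[ℝ] ℝ).hasFDerivAt (x := A)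
  have h1 := hgB.mul_const (if k = l then (1:ℝ) else 0)
  have h2 := (hhB.mul_const (ω k)).mul hproj
  have hD := h1.add h2
  refine ⟨hD.differentiableAt, fun i => ?_⟩
  erw [hD.fderiv]
  simp only [ContinuousLinearMap.add_apply, ContinuousLinearMap.smul_apply, hLs,
    ContinuousLinearMap.proj_apply, smul_eq_mul, Pi.single_apply]
  by_cases h : i = l
  · simp [h]; ring
  · have h' : l ≠ i := fun hh => h hh.symm
    simp [h, h']; ring

lemma sum_helper {N : ℕ} (ω A : Fin N → ℝ) (G H Gd Hd : ℝ) (j k l : Fin N) :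
    ∑ i, (G * (if j = i then 1 else 0) + H * ω j * A i) *
        (Gd * ω i * (if k = l then 1 else 0) + Hd * ω i * (ω k * A l)
          + H * ω k * (if i = l then 1 else 0))
    = G * (Gd * ω j * (if k = l then 1 else 0) + Hd * ω j * (ω k * A l)
          + H * ω k * (if j = l then 1 else 0))
      + H * ω j * (∑ i, ω i * A i) * (Gd * (if k = l then 1 else 0) + Hd * (ω k * A l))
      + H * ω j * A l * (H * ω k) := by
  have step : ∀ i ∈ Finset.univ, (G * (if j = i then 1 else 0) + H * ω j * A i) *
        (Gd * ω i * (if k = l then 1 else 0) + Hd * ω i * (ω k * A l)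
          + H * ω k * (if i = l then 1 else 0))
      = (if j = i then G * (Gd * ω i * (if k = l then 1 else 0) + Hd * ω i * (ω k * A l)
          + H * ω k * (if i = l then 1 else 0)) else 0)
        + (if i = l then H * ω j * A i * (H * ω k) else 0)
        + (ω i * A i) * (H * ω j * (Gd * (if k = l then 1 else 0) + Hd * (ω k * A l))) := by
    intro i _
    by_cases h1 : j = i <;> by_cases h2 : i = l <;> by_cases h3 : k = l <;> simp_all <;> ring
  rw [Finset.sum_congr rfl step]
  rw [Finset.sum_add_distrib, Finset.sum_add_distrib, Finset.sum_ite_eq, Finset.sum_ite_eq',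
    ← Finset.sum_mul]
  simp only [Finset.mem_univ, if_true]
  by_cases h : j = l <;> simp [h] <;> ring

lemma sum_rhs {N : ℕ} (ω A : Fin N → ℝ) (G H : ℝ) (j k l : Fin N) :
    ∑ i, (G * (if i = l then 1 else 0) + H * ω i * A l) *
        (2 * (ω j * (if k = i then 1 else 0) - ω k * (if j = i then 1 else 0)))
    = 2 * G * (ω j * (if k = l then 1 else 0) - ω k * (if j = l then 1 else 0)) := by
  have step : ∀ i ∈ Finset.univ, (G * (if i = l then 1 else 0) + H * ω i * A l) *
        (2 * (ω j * (if k = i then 1 else 0) - ω k * (if j = i then 1 else 0)))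
      = (if i = l then G * (2 * (ω j * (if k = i then 1 else 0)
            - ω k * (if j = i then 1 else 0))) else 0)
        + (if k = i then H * ω i * A l * (2 * ω j) else 0)
        - (if j = i then H * ω i * A l * (2 * ω k) else 0) := by
    intro i _
    by_cases h1 : i = l <;> by_cases h2 : k = i <;> by_cases h3 : j = i <;>
      simp_all <;> ring
  rw [Finset.sum_congr rfl step]
  rw [Finset.sum_sub_distrib, Finset.sum_add_distrib, Finset.sum_ite_eq, Finset.sum_ite_eq,
    Finset.sum_ite_eq']
  simp only [Finset.mem_univ, if_true]
  by_cases h1 : k = l <;> by_cases h2 : j = l <;> simp [h1, h2] <;> ring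

/-- Partial derivative with respect to the `i`-th coordinate of a real-valued function
of `A ∈ ℝᴺ`. -/
noncomputable def pd {N : ℕ} (i : Fin N) (g : (Fin N → ℝ) → ℝ) (A : Fin N → ℝ) : ℝ :=
  fderiv ℝ g A (Pi.single i 1)

/-- For the κ-Minkowski structure constants
`f^{aj}_k = 2(ω^a δ^j_k − ω^j δ^a_k)`, the matrix-valued function
`γ^i_j(A) = (ω·A)(1 + coth(ω·A)) δ^i_j + ((1 − (ω·A) − (ω·A)coth(ω·A))/(ω·A)) ω^i A_j`
is differentiable on `U = {A : ω·A ≠ 0}` and satisfies the first master equation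
`Σ_i (γ^j_i ∂^i_A γ^k_l − γ^k_i ∂^i_A γ^j_l) = Σ_i γ^i_l f^{jk}_i` at every point of `U`. -/
theorem kappa_minkowski_gamma_first_master (N : ℕ) (ω : Fin N → ℝ)
    (f : Fin N → Fin N → Fin N → ℝ)
    (hf : ∀ a j k, f a j k =
      2 * (ω a * (if j = k then 1 else 0) - ω j * (if a = k then 1 else 0)))
    (γ : (Fin N → ℝ) → Fin N → Fin N → ℝ)
    (hγ : ∀ A i j, γ A i j =
      (∑ s, ω s * A s) *
          (1 + Real.cosh (∑ s, ω s * A s) / Real.sinh (∑ s, ω s * A s)) *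
          (if i = j then 1 else 0)
      + ((1 - (∑ s, ω s * A s)
            - (∑ s, ω s * A s) * (Real.cosh (∑ s, ω s * A s) / Real.sinh (∑ s, ω s * A s)))
          / (∑ s, ω s * A s)) * ω i * A j) :
    (∀ A : Fin N → ℝ, (∑ s, ω s * A s) ≠ 0 →
        ∀ i j, DifferentiableAt ℝ (fun B => γ B i j) A) ∧
    (∀ A : Fin N → ℝ, (∑ s, ω s * A s) ≠ 0 → ∀ j k l,
        ∑ i, (γ A j i * pd i (fun B => γ B k l) A - γ A k i * pd i (fun B => γ B j l) A)
          = ∑ i, γ A i l * f j k i) := by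
  have hfun_eq : ∀ (k l : Fin N), (fun B => γ B k l)
      = (fun B => Gf (∑ s, ω s * B s) * (if k = l then 1 else 0)
          + Hf (∑ s, ω s * B s) * ω k * B l) := by
    intro k l; funext B; rw [hγ]; rfl
  constructor
  · intro A hA i j
    rw [hfun_eq]
    exact (gamma_deriv ω i j A hA).1
  · intro A hA j k l
    have hpd : ∀ (i k l : Fin N), pd i (fun B => γ B k l) A
        = Gd (∑ s, ω s * A s) * ω i * (if k = l then 1 else 0)
          + Hd (∑ s, ω s * A s) * ω i * (ω k * A l)
          + Hf (∑ s, ω s * A s) * ω k * (if i = l then 1 else 0) := by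
      intro i k l
      unfold pd
      rw [hfun_eq]
      exact (gamma_deriv ω k l A hA).2 i
    have hγ' : ∀ i j, γ A i j
        = Gf (∑ s, ω s * A s) * (if i = j then 1 else 0)
          + Hf (∑ s, ω s * A s) * ω i * A j := by
      intro i j; rw [hγ]; rfl
    simp only [hγ', hpd, hf]
    rw [Finset.sum_sub_distrib, sum_helper, sum_helper, sum_rhs]
    linear_combination
      ((ω j * (if k = l then (1:ℝ) else 0) - ω k * (if j = l then (1:ℝ) else 0))
          * Gd (∑ s, ω s * A s)) * hGH1 hA
      + (ω j * (if k = l then (1:ℝ) else 0) - ω k * (if j = l then (1:ℝ) else 0)) * hGH2 hA
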